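/- Let T be a contraction on a Hilbert space H, V an isometry on a Hilbert space K, and X : K → H an invertible bounded operator with X V = T X. Then for every λ in the open unit disk, I - b_λ(T₁)* b_λ(T₁) = B⁻¹ (A - b_λ(V)* A b_λ(V)) B⁻¹, where A = X*X, B = (X*X)^{1/2}, and T₁ = W⁻¹ T W with X = W B the polar decomposition (W unitary). In particular A - b_λ(V)* A b_λ(V) is a positive operator. -/

import Mathlib

open scoped InnerProductSpace ComplexConjugate
open ContinuousLinearMap

/-- The Möbius transform `b_λ(T) = (T - λI)(I - conj(λ)T)⁻¹`. -/
noncomputable def blam {K : Type*} [NormedAddCommGroup K] [InnerProductSpace ℂ K]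
    [CompleteSpace K] (T : K →L[ℂ] K) (l : ℂ) : K →L[ℂ] K :=
  (T - l • (1 : K →L[ℂ] K)) * Ring.inverse ((1 : K →L[ℂ] K) - conj l • T)

section Aux

variable {K : Type*} [NormedAddCommGroup K] [InnerProductSpace ℂ K] [CompleteSpace K]

lemma aux_isUnit (T : K →L[ℂ] K) (hT : ‖T‖ ≤ 1) (l : ℂ) (hl : ‖l‖ < 1) :
    IsUnit ((1 : K →L[ℂ] K) - conj l • T) := by
  have h : ‖conj l • T‖ < 1 := by
    rw [norm_smul, RCLike.norm_conj]
    calc ‖l‖ * ‖T‖ ≤ ‖l‖ * 1 := by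
          exact mul_le_mul_of_nonneg_left hT (norm_nonneg _)
      _ < 1 := by simpa using hl
  exact ⟨Units.oneSub _ h, rfl⟩

lemma aux_norm_ineq (T : K →L[ℂ] K) (hT : ‖T‖ ≤ 1) (l : ℂ) (hl : ‖l‖ < 1) (x : K) :
    ‖(T - l • (1 : K →L[ℂ] K)) x‖ ≤ ‖((1 : K →L[ℂ] K) - conj l • T) x‖ := by
  have hTx : ‖T x‖ ≤ ‖x‖ := by
    calc ‖T x‖ ≤ ‖T‖ * ‖x‖ := T.le_opNorm x
      _ ≤ 1 * ‖x‖ := mul_le_mul_of_nonneg_right hT (norm_nonneg _)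
      _ = ‖x‖ := one_mul _
  have e1 : (T - l • (1 : K →L[ℂ] K)) x = T x - l • x := by
    simp [sub_apply, smul_apply]
  have e2 : ((1 : K →L[ℂ] K) - conj l • T) x = x - conj l • (T x) := by
    simp [sub_apply, smul_apply]
  rw [e1, e2]
  have h1 : ‖T x - l • x‖ ^ 2 = ‖T x‖ ^ 2 - 2 * Complex.re (l * ⟪T x, x⟫_ℂ) + ‖l‖ ^ 2 * ‖x‖ ^ 2 := by
    rw [@norm_sub_sq ℂ, inner_smul_right, norm_smul, mul_pow]
    rfl
  have h2 : ‖x - conj l • T x‖ ^ 2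
      = ‖x‖ ^ 2 - 2 * Complex.re (conj l * ⟪x, T x⟫_ℂ) + ‖l‖ ^ 2 * ‖T x‖ ^ 2 := by
    rw [@norm_sub_sq ℂ, inner_smul_right, norm_smul, mul_pow, RCLike.norm_conj]
    rfl
  have hre : Complex.re (conj l * ⟪x, T x⟫_ℂ) = Complex.re (l * ⟪T x, x⟫_ℂ) := by
    have : conj l * ⟪x, T x⟫_ℂ = conj (l * ⟪T x, x⟫_ℂ) := by
      rw [map_mul, inner_conj_symm]
    rw [this, Complex.conj_re]
  have hsq : ‖T x - l • x‖ ^ 2 ≤ ‖x - conj l • T x‖ ^ 2 := by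
    rw [h1, h2, hre]
    have hl2 : ‖l‖ ^ 2 ≤ 1 := by nlinarith [norm_nonneg l]
    have hTx2 : ‖T x‖ ^ 2 ≤ ‖x‖ ^ 2 := by nlinarith [norm_nonneg (T x)]
    nlinarith [mul_nonneg (sub_nonneg.2 hl2) (sub_nonneg.2 hTx2)]
  nlinarith [norm_nonneg (T x - l • x), norm_nonneg (x - conj l • T x)]

lemma aux_blam_contraction (T : K →L[ℂ] K) (hT : ‖T‖ ≤ 1) (l : ℂ) (hl : ‖l‖ < 1) (y : K) :
    ‖blam T l y‖ ≤ ‖y‖ := by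
  have hu := aux_isUnit T hT l hl
  set z := Ring.inverse ((1 : K →L[ℂ] K) - conj l • T) y with hz
  have hy : ((1 : K →L[ℂ] K) - conj l • T) z = y := by
    have := Ring.mul_inverse_cancel _ hu
    calc ((1 : K →L[ℂ] K) - conj l • T) z
        = (((1 : K →L[ℂ] K) - conj l • T) * Ring.inverse ((1 : K →L[ℂ] K) - conj l • T)) y := rfl
      _ = y := by rw [this]; rfl
  have hb : blam T l y = (T - l • (1 : K →L[ℂ] K)) z := rfl
  rw [hb, ← hy]
  exact aux_norm_ineq T hT l hl z

lemma aux_blam_intertwine (S V B : K →L[ℂ] K) (hS : ‖S‖ ≤ 1) (hV : ‖V‖ ≤ 1)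
    (l : ℂ) (hl : ‖l‖ < 1) (h : S * B = B * V) :
    blam S l * B = B * blam V l := by
  have hu := aux_isUnit S hS l hl
  have hv := aux_isUnit V hV l hl
  set u := (1 : K →L[ℂ] K) - conj l • S with hudef
  set v := (1 : K →L[ℂ] K) - conj l • V with hvdef
  have h2 : u * B = B * v := by
    rw [hudef, hvdef]
    simp only [sub_mul, mul_sub, one_mul, mul_one, smul_mul_assoc, mul_smul_comm, h]
  have h3 : Ring.inverse u * B = B * Ring.inverse v := by
    have hB' : B = B * v * Ring.inverse v := by
      rw [mul_assoc, Ring.mul_inverse_cancel _ hv, mul_one]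
    calc Ring.inverse u * B = Ring.inverse u * (B * v * Ring.inverse v) := by rw [← hB']
      _ = Ring.inverse u * (u * B * Ring.inverse v) := by rw [h2]
      _ = (Ring.inverse u * u) * (B * Ring.inverse v) := by simp only [mul_assoc]
      _ = B * Ring.inverse v := by rw [Ring.inverse_mul_cancel _ hu, one_mul]
  have h4 : (S - l • (1 : K →L[ℂ] K)) * B = B * (V - l • (1 : K →L[ℂ] K)) := by
    simp only [sub_mul, mul_sub, one_mul, mul_one, smul_mul_assoc, mul_smul_comm, h]
  calc blam S l * B = (S - l • (1 : K →L[ℂ] K)) * (Ring.inverse u * B) := by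
        rw [blam, mul_assoc]
    _ = (S - l • (1 : K →L[ℂ] K)) * B * Ring.inverse v := by rw [h3, mul_assoc]
    _ = B * ((V - l • (1 : K →L[ℂ] K)) * Ring.inverse v) := by rw [h4, mul_assoc]
    _ = B * blam V l := rfl

end Aux

set_option maxHeartbeats 1600000 in
/-- Let `T` be a contraction on `H`, `V` an isometry on `K`, and `X : K → H` an
invertible bounded operator with `XV = TX`. Write the polar decomposition
`X = W B` with `W : K → H` unitary, `B = (X*X)^{1/2}` positive and invertible
(with inverse `B⁻¹`), and set `A = X*X = B²` and `T₁ = W⁻¹TW`. Then for every `λ`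
in the open unit disk,
`I - b_λ(T₁)* b_λ(T₁) = B⁻¹ (A - b_λ(V)* A b_λ(V)) B⁻¹`;
in particular `A - b_λ(V)* A b_λ(V)` is a positive operator. -/
theorem blam_defect_conjugation {H K : Type*} [NormedAddCommGroup H]
    [InnerProductSpace ℂ H] [CompleteSpace H] [NormedAddCommGroup K]
    [InnerProductSpace ℂ K] [CompleteSpace K]
    (T : H →L[ℂ] H) (hT : ‖T‖ ≤ 1) (V : K →L[ℂ] K) (hV : ∀ x : K, ‖V x‖ = ‖x‖)
    (X : K →L[ℂ] H) (Xinv : H →L[ℂ] K)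
    (hX₁ : Xinv.comp X = 1) (hX₂ : X.comp Xinv = 1)
    (hint : X.comp V = T.comp X)
    (W : K →L[ℂ] H) (hW₁ : (adjoint W).comp W = 1) (hW₂ : W.comp (adjoint W) = 1)
    (B : K →L[ℂ] K) (hB : B.IsPositive) (hB2 : B * B = (adjoint X).comp X)
    (hpolar : X = W.comp B)
    (Binv : K →L[ℂ] K) (hBinv₁ : Binv * B = 1) (hBinv₂ : B * Binv = 1)
    (l : ℂ) (hl : ‖l‖ < 1) :
    ((1 : K →L[ℂ] K) -
        (adjoint (blam ((adjoint W).comp (T.comp W)) l)).comp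
          (blam ((adjoint W).comp (T.comp W)) l) =
      Binv *
        (((adjoint X).comp X) -
          (adjoint (blam V l)).comp ((((adjoint X).comp X)).comp (blam V l))) *
        Binv) ∧
    (((adjoint X).comp X) -
        (adjoint (blam V l)).comp ((((adjoint X).comp X)).comp (blam V l))).IsPositive := by
  set T₁ : K →L[ℂ] K := (adjoint W).comp (T.comp W) with hT₁def
  set A : K →L[ℂ] K := (adjoint X).comp X with hAdef
  -- basic isometry facts
  have hWW : ∀ y : K, adjoint W (W y) = y := fun y => by
    have := congrFun (congrArg DFunLike.coe hW₁) y
    simpa using this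
  have hWWa : ∀ y : H, W (adjoint W y) = y := fun y => by
    have := congrFun (congrArg DFunLike.coe hW₂) y
    simpa using this
  have hWiso : ∀ x : K, ‖W x‖ = ‖x‖ := by
    intro x
    have h : ⟪W x, W x⟫_ℂ = ⟪x, x⟫_ℂ := by
      rw [← adjoint_inner_left, hWW]
    have h2 : (‖W x‖ : ℝ) ^ 2 = ‖x‖ ^ 2 := by
      rw [← @inner_self_eq_norm_sq ℂ, ← @inner_self_eq_norm_sq ℂ, h]
    have h3 : Real.sqrt (‖W x‖ ^ 2) = Real.sqrt (‖x‖ ^ 2) := by rw [h2]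
    simpa [Real.sqrt_sq, norm_nonneg] using h3
  have hWaiso : ∀ y : H, ‖adjoint W y‖ = ‖y‖ := by
    intro y
    have h : ⟪adjoint W y, adjoint W y⟫_ℂ = ⟪y, y⟫_ℂ := by
      rw [adjoint_inner_left, hWWa]
    have h2 : (‖adjoint W y‖ : ℝ) ^ 2 = ‖y‖ ^ 2 := by
      rw [← @inner_self_eq_norm_sq ℂ, ← @inner_self_eq_norm_sq ℂ, h]
    have h3 : Real.sqrt (‖adjoint W y‖ ^ 2) = Real.sqrt (‖y‖ ^ 2) := by rw [h2]
    simpa [Real.sqrt_sq, norm_nonneg] using h3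
  have hVnorm : ‖V‖ ≤ 1 := opNorm_le_bound V zero_le_one (fun x => by rw [hV x, one_mul])
  have hT₁norm : ‖T₁‖ ≤ 1 := by
    apply opNorm_le_bound _ zero_le_one
    intro x
    have : T₁ x = adjoint W (T (W x)) := rfl
    rw [this, hWaiso, one_mul]
    calc ‖T (W x)‖ ≤ ‖T‖ * ‖W x‖ := T.le_opNorm _
      _ ≤ 1 * ‖x‖ := by
          rw [hWiso]; exact mul_le_mul_of_nonneg_right hT (norm_nonneg _)
      _ = ‖x‖ := one_mul _
  -- intertwining T₁ B = B V
  have h1 : T₁ * B = B * V := by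
    ext x
    have h := congrFun (congrArg DFunLike.coe hint) x
    rw [hpolar] at h
    simp only [comp_apply] at h
    have : T₁ (B x) = adjoint W (T (W (B x))) := rfl
    calc (T₁ * B) x = adjoint W (T (W (B x))) := rfl
      _ = adjoint W (W (B (V x))) := by rw [← h]
      _ = B (V x) := hWW _
      _ = (B * V) x := rfl
  have hcomm : blam T₁ l * B = B * blam V l :=
    aux_blam_intertwine T₁ V B hT₁norm hVnorm l hl h1
  have hBstar : star B = B := hB.isSelfAdjoint
  have hadj : B * adjoint (blam T₁ l) = adjoint (blam V l) * B := by
    have h := congrArg star hcomm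
    rw [star_mul, star_mul] at h
    rw [← star_eq_adjoint, ← star_eq_adjoint, ← hBstar]
    exact h
  set S : K →L[ℂ] K := blam T₁ l with hSdef
  have key : A - adjoint (blam V l) * (A * blam V l)
      = B * ((1 : K →L[ℂ] K) - adjoint S * S) * B := by
    rw [← hB2]
    have e : adjoint (blam V l) * (B * B * blam V l) = B * (adjoint S * S) * B := by
      calc adjoint (blam V l) * (B * B * blam V l)
          = (adjoint (blam V l) * B) * (B * blam V l) := by noncomm_ring
        _ = (B * adjoint S) * (S * B) := by rw [← hadj, ← hcomm]
        _ = B * (adjoint S * S) * B := by noncomm_ring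
    rw [e]
    noncomm_ring
  -- convert goal comps to mul
  have goal_eq : (1 : K →L[ℂ] K) - (adjoint S).comp S
      = Binv * (A - (adjoint (blam V l)).comp (A.comp (blam V l))) * Binv := by
    have hc1 : (adjoint S).comp S = adjoint S * S := rfl
    have hc2 : (adjoint (blam V l)).comp (A.comp (blam V l))
        = adjoint (blam V l) * (A * blam V l) := rfl
    rw [hc1, hc2, key]
    calc (1 : K →L[ℂ] K) - adjoint S * S
        = ((Binv * B) * ((1 : K →L[ℂ] K) - adjoint S * S)) * (B * Binv) := by
          rw [hBinv₁, hBinv₂, one_mul, mul_one]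
      _ = Binv * (B * ((1 : K →L[ℂ] K) - adjoint S * S) * B) * Binv := by
          noncomm_ring
  refine ⟨goal_eq, ?_⟩
  -- positivity
  have hSc : ∀ y : K, ‖S y‖ ≤ ‖y‖ := fun y => aux_blam_contraction T₁ hT₁norm l hl y
  have hexpr : A - (adjoint (blam V l)).comp (A.comp (blam V l))
      = B * ((1 : K →L[ℂ] K) - adjoint S * S) * B := by
    have hc2 : (adjoint (blam V l)).comp (A.comp (blam V l))
        = adjoint (blam V l) * (A * blam V l) := rfl
    rw [hc2, key]
  rw [hexpr]
  set C : K →L[ℂ] K := (1 : K →L[ℂ] K) - adjoint S * S with hCdef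
  have hCstar : star C = C := by
    rw [hCdef, star_sub, star_one, star_mul, ← star_eq_adjoint, star_star]
  constructor
  · rw [← isSelfAdjoint_iff_isSymmetric]
    show star (B * C * B) = B * C * B
    rw [star_mul, star_mul, hBstar, hCstar, mul_assoc]
  · intro x
    have happ : (B * C * B) x = B (C (B x)) := rfl
    have hinner : ⟪(B * C * B) x, x⟫_ℂ = ⟪C (B x), B x⟫_ℂ := by
      rw [happ]
      calc ⟪B (C (B x)), x⟫_ℂ = ⟪adjoint B (C (B x)), x⟫_ℂ := by
            rw [← star_eq_adjoint, hBstar]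
        _ = ⟪C (B x), B x⟫_ℂ := adjoint_inner_left B _ _
    have hC : ∀ z : K, 0 ≤ RCLike.re ⟪C z, z⟫_ℂ := by
      intro z
      have hCz : C z = z - adjoint S (S z) := by
        rw [hCdef]; simp [sub_apply, mul_apply]
      have : ⟪C z, z⟫_ℂ = ⟪z, z⟫_ℂ - ⟪S z, S z⟫_ℂ := by
        rw [hCz, inner_sub_left, adjoint_inner_left]
      have hre : RCLike.re ⟪C z, z⟫_ℂ = ‖z‖ ^ 2 - ‖S z‖ ^ 2 := by
        rw [this, map_sub, @inner_self_eq_norm_sq ℂ, @inner_self_eq_norm_sq ℂ]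
      rw [hre]
      have := hSc z
      nlinarith [norm_nonneg (S z), norm_nonneg z]
    show 0 ≤ (B * C * B).reApplyInnerSelf x
    rw [reApplyInnerSelf]
    rw [hinner]
    exact hC (B x)
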